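/- Let (G, (λ_x : x ∈ X/G)) and (G, (κ_x : x ∈ X/G)) be rack envelopes, and for every x ∈ X/G and y ∈ xG fix g_y ∈ G with x g_y = y. Then the racks corresponding to the two envelopes are isomorphic if and only if there is f ∈ N_{S_X}(G) such that for every x ∈ X/G, with y = xf⁻¹, one has κ_x = f⁻¹ (g_y⁻¹ λ_{y g_y⁻¹} g_y) f. -/

import Mathlib

/-- A rack: a binary operation with bijective left translations satisfying the left
self-distributive law. -/
structure RackStr (X : Type*) where
  op : X → X → X
  bij : ∀ x, Function.Bijective (op x)
  self_distrib : ∀ x y z, op x (op y z) = op (op x y) (op x z)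

/-- A quandle: an idempotent rack. -/
structure QuandleStr (X : Type*) extends RackStr X where
  idem : ∀ x, op x x = x

namespace RackStr

variable {X : Type*}

/-- The left translation `L_x : y ↦ x * y`, as a permutation of `X`. -/
noncomputable def L (Q : RackStr X) (x : X) : Equiv.Perm X :=
  Equiv.ofBijective (Q.op x) (Q.bij x)

/-- The left multiplication group `Lmlt(X,*) = ⟨L_x : x ∈ X⟩ ≤ S_X`. -/
noncomputable def lmlt (Q : RackStr X) : Subgroup (Equiv.Perm X) :=
  Subgroup.closure (Set.range Q.L)

end RackStr

/-- `R` is a complete set of representatives of the orbits of `G ≤ S_X` on `X`: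
every `y ∈ X` lies in the orbit of a unique element of `R`. -/
def IsTransversal {X : Type*} (G : Subgroup (Equiv.Perm X)) (R : Set X) : Prop :=
  ∀ y : X, ∃! x : X, x ∈ R ∧ ∃ g ∈ G, g • y = x

/-- The stabilizer `G_x` of `x` in `G`, as a subgroup of `S_X`. -/
def stabIn {X : Type*} (G : Subgroup (Equiv.Perm X)) (x : X) : Subgroup (Equiv.Perm X) :=
  G ⊓ MulAction.stabilizer (Equiv.Perm X) x

/-- The centralizer `C_G(G_x)` of the stabilizer `G_x` in `G`, as a subgroup of `S_X`. -/
def cgStab {X : Type*} (G : Subgroup (Equiv.Perm X)) (x : X) : Subgroup (Equiv.Perm X) :=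
  G ⊓ Subgroup.centralizer (stabIn G x : Set (Equiv.Perm X))

/-- The center `Z(G_x)` of the stabilizer `G_x`, as a subgroup of `S_X`. -/
def zStab {X : Type*} (G : Subgroup (Equiv.Perm X)) (x : X) : Subgroup (Equiv.Perm X) :=
  stabIn G x ⊓ Subgroup.centralizer (stabIn G x : Set (Equiv.Perm X))

/-- The conjugacy class `a^G = { g⁻¹ a g : g ∈ G }` of `a` under `G`
(written in left-action convention). -/
def conjClassOf {X : Type*} (G : Subgroup (Equiv.Perm X)) (a : Equiv.Perm X) :
    Set (Equiv.Perm X) :=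
  {h | ∃ g ∈ G, h = g * a * g⁻¹}

/-- A rack envelope over `G` (with orbit representatives `R`), given as a function on `X`
whose values at `R` form the envelope data. -/
def IsRackEnvelopeFun {X : Type*} (G : Subgroup (Equiv.Perm X)) (R : Set X)
    (Λ : X → Equiv.Perm X) : Prop :=
  (∀ x ∈ R, Λ x ∈ cgStab G x) ∧
  Subgroup.closure (⋃ x ∈ R, conjClassOf G (Λ x)) = G

section Aux

variable {X : Type*} (G : Subgroup (Equiv.Perm X)) (R : Set X)

/-- Left translation function of an envelope. -/
def Lenv (gsel Λ : X → Equiv.Perm X) (u : X) : Equiv.Perm X :=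
  gsel u * Λ ((gsel u)⁻¹ • u) * (gsel u)⁻¹

theorem transversal_unique (hR : IsTransversal G R) {x₁ x₂ : X} (h1 : x₁ ∈ R) (h2 : x₂ ∈ R)
    {g : Equiv.Perm X} (hg : g ∈ G) (hgx : g • x₁ = x₂) : x₁ = x₂ := by
  obtain ⟨x, -, hu⟩ := hR x₁
  have e1 : x₁ = x := hu x₁ ⟨h1, 1, one_mem _, one_smul _ _⟩
  have e2 : x₂ = x := hu x₂ ⟨h2, g, hg, hgx⟩
  rw [e1, e2]

theorem lam_comm {Λ : X → Equiv.Perm X} {x : X} (hx : Λ x ∈ cgStab G x)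
    {h : Equiv.Perm X} (hh : h ∈ G) (hhx : h • x = x) : h * Λ x = Λ x * h :=
  Subgroup.mem_centralizer_iff.mp hx.2 h ⟨hh, hhx⟩

variable (gsel : X → Equiv.Perm X) {Λ : X → Equiv.Perm X}

theorem Lenv_conj (hgG : ∀ y : X, gsel y ∈ G) (hgR : ∀ y : X, (gsel y)⁻¹ • y ∈ R) (hR : IsTransversal G R) (hΛ1 : ∀ x ∈ R, Λ x ∈ cgStab G x)
    {g : Equiv.Perm X} (hg : g ∈ G) (u : X) :
    Lenv gsel Λ (g • u) = g * Lenv gsel Λ u * g⁻¹ := by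
  set x := (gsel u)⁻¹ • u with hxd
  have hx : x ∈ R := hgR u
  set x' := (gsel (g • u))⁻¹ • (g • u) with hxd'
  have hx' : x' ∈ R := hgR (g • u)
  have hh : (gsel (g • u))⁻¹ * g * gsel u ∈ G :=
    mul_mem (mul_mem (inv_mem (hgG _)) hg) (hgG u)
  have hstep : ((gsel (g • u))⁻¹ * g * gsel u) • x = x' := by
    simp [hxd, hxd', mul_smul]
  have hxx : x = x' := transversal_unique G R hR hx hx' hh hstep
  have hc : ((gsel (g • u))⁻¹ * g * gsel u) * Λ x = Λ x * ((gsel (g • u))⁻¹ * g * gsel u) :=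
    lam_comm G (hΛ1 x hx) hh (by rw [hstep, ← hxx])
  show gsel (g • u) * Λ x' * (gsel (g • u))⁻¹ = g * (gsel u * Λ x * (gsel u)⁻¹) * g⁻¹
  rw [← hxx]
  calc gsel (g • u) * Λ x * (gsel (g • u))⁻¹
      = gsel (g • u) * (Λ x * ((gsel (g • u))⁻¹ * g * gsel u)) * (gsel u)⁻¹ * g⁻¹ := by group
    _ = gsel (g • u) * (((gsel (g • u))⁻¹ * g * gsel u) * Λ x) * (gsel u)⁻¹ * g⁻¹ := by rw [← hc]
    _ = g * (gsel u * Λ x * (gsel u)⁻¹) * g⁻¹ := by group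

theorem Lenv_fix (hgG : ∀ y : X, gsel y ∈ G) (hgR : ∀ y : X, (gsel y)⁻¹ • y ∈ R) (hR : IsTransversal G R) (hΛ1 : ∀ x ∈ R, Λ x ∈ cgStab G x)
    {x : X} (hx : x ∈ R) : Lenv gsel Λ x = Λ x := by
  have h1 : (gsel x)⁻¹ • x = x :=
    transversal_unique G R hR (hgR x) hx (hgG x) (by simp)
  have h2 : gsel x • x = x := by
    have := congrArg (fun z => gsel x • z) h1
    simpa using this.symm
  show gsel x * Λ ((gsel x)⁻¹ • x) * (gsel x)⁻¹ = Λ x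
  rw [h1, lam_comm G (hΛ1 x hx) (hgG x) h2]
  group

theorem Lenv_range (hgG : ∀ y : X, gsel y ∈ G) (hgR : ∀ y : X, (gsel y)⁻¹ • y ∈ R) (hR : IsTransversal G R) (hΛ : IsRackEnvelopeFun G R Λ) :
    Set.range (Lenv gsel Λ) = ⋃ x ∈ R, conjClassOf G (Λ x) := by
  ext a
  constructor
  · rintro ⟨u, rfl⟩
    exact Set.mem_biUnion (hgR u) ⟨gsel u, hgG u, rfl⟩
  · intro hm
    simp only [Set.mem_iUnion, conjClassOf, Set.mem_setOf_eq] at hm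
    obtain ⟨x, hx, g, hg, rfl⟩ := hm
    refine ⟨g • x, ?_⟩
    rw [Lenv_conj G R gsel hgG hgR hR hΛ.1 hg, Lenv_fix G R gsel hgG hgR hR hΛ.1 hx]

theorem Lenv_closure (hgG : ∀ y : X, gsel y ∈ G) (hgR : ∀ y : X, (gsel y)⁻¹ • y ∈ R) (hR : IsTransversal G R) (hΛ : IsRackEnvelopeFun G R Λ) :
    Subgroup.closure (Set.range (Lenv gsel Λ)) = G := by
  rw [Lenv_range G R gsel hgG hgR hR hΛ]; exact hΛ.2

end Aux

/-- Proposition `Pr:Iso`: let `(G,(λ_x))` and `(G,(κ_x))` be rack envelopes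
and for every `y ∈ X` fix `g_y ∈ G` carrying the orbit representative `y g_y⁻¹ ∈ R` to
`y`.  The corresponding racks (whose left translations are `L_y = g_y⁻¹ λ_{y g_y⁻¹} g_y`,
written below in left-action convention) are isomorphic if and only if there is
`f ∈ N_{S_X}(G)` with `κ_x = ((λ_{y g_y⁻¹})^{g_y})^f` for every `x ∈ R`, where `y = xf⁻¹`. -/
theorem envelope_iso_criterion {X : Type*} (G : Subgroup (Equiv.Perm X)) (R : Set X)
    (hR : IsTransversal G R) (gsel : X → Equiv.Perm X)
    (hgG : ∀ y : X, gsel y ∈ G) (hgR : ∀ y : X, (gsel y)⁻¹ • y ∈ R)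
    (Λ κ : X → Equiv.Perm X)
    (hΛ : IsRackEnvelopeFun G R Λ) (hκ : IsRackEnvelopeFun G R κ) :
    (∃ f : Equiv.Perm X, ∀ u v : X,
        f ((gsel u * Λ ((gsel u)⁻¹ • u) * (gsel u)⁻¹) v) =
          (gsel (f u) * κ ((gsel (f u))⁻¹ • (f u)) * (gsel (f u))⁻¹) (f v)) ↔
    (∃ f ∈ Subgroup.normalizer (G : Set (Equiv.Perm X)), ∀ x ∈ R,
        κ x = f * (gsel (f⁻¹ • x) * Λ ((gsel (f⁻¹ • x))⁻¹ • (f⁻¹ • x)) *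
          (gsel (f⁻¹ • x))⁻¹) * f⁻¹) := by
  constructor
  · rintro ⟨f, hf⟩
    have hL : ∀ u, f * Lenv gsel Λ u * f⁻¹ = Lenv gsel κ (f u) := by
      intro u
      have h : f * Lenv gsel Λ u = Lenv gsel κ (f u) * f :=
        Equiv.ext fun v => by
          simpa [Lenv, Equiv.Perm.mul_apply] using hf u v
      rw [h, mul_inv_cancel_right]
    -- f normalizes G
    have hset : (MulAut.conj f).toMonoidHom '' Set.range (Lenv gsel Λ)
        = Set.range (Lenv gsel κ) := by
      rw [← Set.range_comp]
      have he : ((MulAut.conj f).toMonoidHom ∘ Lenv gsel Λ) = Lenv gsel κ ∘ f :=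
        funext fun u => by simpa [MulAut.conj_apply] using hL u
      rw [he, Function.Surjective.range_comp f.surjective]
    have hmap : G.map (MulAut.conj f).toMonoidHom = G := by
      calc G.map (MulAut.conj f).toMonoidHom
          = (Subgroup.closure (Set.range (Lenv gsel Λ))).map (MulAut.conj f).toMonoidHom := by
            rw [Lenv_closure G R gsel hgG hgR hR hΛ]
        _ = Subgroup.closure ((MulAut.conj f).toMonoidHom '' Set.range (Lenv gsel Λ)) :=
            MonoidHom.map_closure _ _
        _ = G := by rw [hset]; exact Lenv_closure G R gsel hgG hgR hR hκ
    have hfN : f ∈ Subgroup.normalizer (G : Set (Equiv.Perm X)) := by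
      refine Subgroup.mem_normalizer_iff.mpr fun h => ⟨fun hh => ?_, fun hh => ?_⟩
      · have : (MulAut.conj f).toMonoidHom h ∈ G.map (MulAut.conj f).toMonoidHom :=
          Subgroup.mem_map_of_mem _ hh
        rw [hmap] at this
        simpa [MulAut.conj_apply] using this
      · rw [← hmap] at hh
        obtain ⟨h', hh', he⟩ := hh
        have : h' = h := (MulAut.conj f).injective
          (by simpa [MulAut.conj_apply] using he)
        rwa [← this]
    refine ⟨f, hfN, fun x hx => ?_⟩
    have h1 : Lenv gsel κ x = κ x := Lenv_fix G R gsel hgG hgR hR hκ.1 hx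
    have h2 := hL (f⁻¹ • x)
    have h3 : f (f⁻¹ • x) = x := by simp [Equiv.Perm.smul_def]
    rw [h3, h1] at h2
    exact h2.symm
  · rintro ⟨f, hfN, hfx⟩
    refine ⟨f, fun u v => ?_⟩
    suffices h : f * Lenv gsel Λ u * f⁻¹ = Lenv gsel κ (f u) by
      have h' : f * Lenv gsel Λ u = Lenv gsel κ (f u) * f := by rw [← h]; group
      have := congrArg (fun p : Equiv.Perm X => p v) h'
      simpa [Lenv, Equiv.Perm.mul_apply] using this
    set x := (gsel (f u))⁻¹ • (f u) with hxd
    have hx : x ∈ R := hgR (f u)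
    have hk : κ x = f * Lenv gsel Λ (f⁻¹ • x) * f⁻¹ := hfx x hx
    have hinv : f⁻¹ ∈ Subgroup.normalizer (G : Set (Equiv.Perm X)) := inv_mem hfN
    have hhG : f⁻¹ * gsel (f u) * f ∈ G := by
      have := (Subgroup.mem_normalizer_iff.mp hinv (gsel (f u))).mp (hgG (f u))
      simpa using this
    have hB := Lenv_conj G R gsel hgG hgR hR hΛ.1 hhG (f⁻¹ • x)
    have hpt : (f⁻¹ * gsel (f u) * f) • (f⁻¹ • x) = u := by
      simp [hxd, mul_smul, Equiv.Perm.smul_def]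
    rw [hpt] at hB
    rw [hB]
    show _ = gsel (f u) * κ x * (gsel (f u))⁻¹
    rw [hk]
    group
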